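/- Let a, b : ℕ → ℕ satisfy a(0) = 1, b(0) = 0, and for all n ≥ 1, a(n) = n − b(a(n−1)) and b(n) = n − a(b(n−1)). Let γ = (√5−1)/2. Then for all n ≥ 1: a(n) = ⌊(n+1)γ⌋ unless n = F_{2k} − 1 for some k ≥ 2, in which case a(F_{2k} − 1) = ⌊F_{2k}·γ⌋ + 1; and b(n) = ⌊(n+1)γ⌋ unless n = F_{2k+1} − 1 for some k ≥ 1, in which case b(F_{2k+1} − 1) = ⌊F_{2k+1}·γ⌋ − 1. -/

import Mathlib

lemma stoll_gamma_facts : 1/2 < (Real.sqrt 5 - 1)/2 ∧ (Real.sqrt 5 - 1)/2 < 2/3 ∧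
    ((Real.sqrt 5 - 1)/2)^2 = 1 - (Real.sqrt 5 - 1)/2 ∧ Irrational ((Real.sqrt 5 - 1)/2) := by
  have h5 : Real.sqrt 5 ^ 2 = 5 := Real.sq_sqrt (by norm_num)
  have h0 : 0 ≤ Real.sqrt 5 := Real.sqrt_nonneg 5
  refine ⟨by nlinarith, by nlinarith, by nlinarith, ?_⟩
  have : Irrational (Real.sqrt 5) := (Nat.prime_five).irrational_sqrt
  have h1 : Irrational (Real.sqrt 5 - (1:ℚ)) := this.sub_ratCast (q := 1)
  have := h1.div_natCast (m := 2) (by norm_num)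
  simpa using this

lemma stoll_master (γ : ℝ) (hsq : γ^2 = 1 - γ) :
    ∀ m : ℕ, γ * Nat.fib (m+1) = Nat.fib m + (-1)^m * γ^(m+1) := by
  intro m
  induction m using Nat.twoStepInduction with
  | zero => simp
  | one => push_cast [Nat.fib_one, Nat.fib_two]; ring_nf; nlinarith [hsq]
  | more m ih1 ih2 =>
      have hf : (Nat.fib (m+2) : ℝ) = Nat.fib m + Nat.fib (m+1) := by
        rw [Nat.fib_add_two]; push_cast; ring
      have hf3 : (Nat.fib (m+3) : ℝ) = Nat.fib (m+1) + Nat.fib (m+2) := by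
        rw [show m+3 = (m+1)+2 by ring, Nat.fib_add_two]; push_cast; ring
      have : γ * Nat.fib (m+3) = γ * Nat.fib (m+1) + γ * Nat.fib (m+2) := by
        rw [hf3]; ring
      rw [this, ih1, ih2, hf]
      have : (-1:ℝ)^(m+2) = (-1)^m := by ring
      rw [this, show (-1:ℝ)^(m+1) = -(-1)^m by ring]
      have hg3 : γ^(m+3) = γ^(m+1) - γ^(m+2) := by
        have : γ^(m+3) = γ^(m+1) * γ^2 := by ring
        rw [this, hsq]; ring
      rw [hg3]; ring

section Floors
variable {γ : ℝ} (hlo : 1/2 < γ) (hhi : γ < 2/3) (hsq : γ^2 = 1 - γ)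

include hlo hhi in
lemma stoll_pow_bounds (m j : ℕ) (h : j ≤ m) : 0 < γ^m ∧ γ^m ≤ γ^j := by
  refine ⟨by positivity, pow_le_pow_of_le_one (by linarith) (by linarith) h⟩

lemma stoll_floor_eq {x : ℝ} {N : ℕ} (h1 : (N:ℝ) ≤ x) (h2 : x < N+1) : ⌊x⌋₊ = N := by
  rw [Nat.floor_eq_iff (le_trans (by positivity) h1)]
  exact ⟨h1, h2⟩

include hsq in
lemma stoll_pows : γ^3 = 2*γ-1 ∧ γ^4 = 2-3*γ ∧ γ^5 = 5*γ-3 := by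
  refine ⟨by linear_combination (γ-1)*hsq, by linear_combination (γ^2-γ+2)*hsq,
    by linear_combination (γ^3-γ^2+2*γ-3)*hsq⟩

include hlo hhi hsq

-- F1 : k ≥ 2 : ⌊fib(2k) γ⌋ + 1 = fib(2k-1)
lemma stoll_F1 {k : ℕ} (hk : 2 ≤ k) : ⌊(Nat.fib (2*k) : ℝ) * γ⌋₊ + 1 = Nat.fib (2*k-1) := by
  obtain ⟨j, rfl⟩ : ∃ j, k = j + 2 := ⟨k - 2, by omega⟩
  have hm := stoll_master γ hsq (2*j+3)
  have hp := stoll_pow_bounds hlo hhi (2*j+4) 2 (by omega)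
  have hs : (-1:ℝ)^(2*j+3) = -1 := Odd.neg_one_pow ⟨j+1, by ring⟩
  rw [hs] at hm
  have hfib : (1:ℕ) ≤ Nat.fib (2*j+3) := Nat.fib_pos.mpr (by omega)
  have h1 : ⌊(Nat.fib (2*(j+2)) : ℝ) * γ⌋₊ = Nat.fib (2*j+3) - 1 := by
    apply stoll_floor_eq
    · rw [Nat.cast_sub hfib, show 2*(j+2) = 2*j+3+1 by ring]
      push_cast
      nlinarith [hm, hp.1, hp.2, hsq]
    · rw [Nat.cast_sub hfib, show 2*(j+2) = 2*j+3+1 by ring]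
      push_cast
      nlinarith [hm, hp.1, hp.2, hsq]
  rw [h1, show 2*(j+2)-1 = 2*j+3 by omega]
  omega

-- F3 : k ≥ 2 : ⌊(fib(2k)+1) γ⌋ = fib(2k-1)
lemma stoll_F3 {k : ℕ} (hk : 2 ≤ k) : ⌊((Nat.fib (2*k) + 1 : ℕ) : ℝ) * γ⌋₊ = Nat.fib (2*k-1) := by
  obtain ⟨j, rfl⟩ : ∃ j, k = j + 2 := ⟨k - 2, by omega⟩
  have hm := stoll_master γ hsq (2*j+3)
  have hp := stoll_pow_bounds hlo hhi (2*j+4) 2 (by omega)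
  have hs : (-1:ℝ)^(2*j+3) = -1 := Odd.neg_one_pow ⟨j+1, by ring⟩
  rw [hs] at hm
  rw [show 2*(j+2)-1 = 2*j+3 by omega]
  apply stoll_floor_eq <;>
  · rw [show 2*(j+2) = 2*j+3+1 by ring]
    push_cast
    nlinarith [hm, hp.1, hp.2, hsq]

-- F2 : k ≥ 2 : ⌊(fib(2k-1)+1) γ⌋ = fib(2k-2)
lemma stoll_F2 {k : ℕ} (hk : 2 ≤ k) :
    ⌊((Nat.fib (2*k-1) + 1 : ℕ) : ℝ) * γ⌋₊ = Nat.fib (2*k-2) := by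
  obtain ⟨j, rfl⟩ : ∃ j, k = j + 2 := ⟨k - 2, by omega⟩
  have hm := stoll_master γ hsq (2*j+2)
  have hp := stoll_pow_bounds hlo hhi (2*j+3) 3 (by omega)
  have hs : (-1:ℝ)^(2*j+2) = 1 := Even.neg_one_pow ⟨j+1, by ring⟩
  rw [hs] at hm
  have h3 := (stoll_pows hsq).1
  rw [show 2*(j+2)-1 = 2*j+2+1 by omega, show 2*(j+2)-2 = 2*j+2 by omega]
  apply stoll_floor_eq <;>
  · push_cast
    nlinarith [hm, hp.1, hp.2, hsq]

-- F4 : k ≥ 1 : ⌊fib(2k+1) γ⌋ = fib(2k)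
lemma stoll_F4 {k : ℕ} (hk : 1 ≤ k) : ⌊(Nat.fib (2*k+1) : ℝ) * γ⌋₊ = Nat.fib (2*k) := by
  obtain ⟨j, rfl⟩ : ∃ j, k = j + 1 := ⟨k - 1, by omega⟩
  have hm := stoll_master γ hsq (2*j+2)
  have hp := stoll_pow_bounds hlo hhi (2*j+3) 3 (by omega)
  have hs : (-1:ℝ)^(2*j+2) = 1 := Even.neg_one_pow ⟨j+1, by ring⟩
  rw [hs] at hm
  have h3 := (stoll_pows hsq).1
  rw [show 2*(j+1)+1 = 2*j+2+1 by ring, show 2*(j+1) = 2*j+2 by ring]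
  apply stoll_floor_eq <;>
  · push_cast
    nlinarith [hm, hp.1, hp.2, hsq]

-- F5 : k ≥ 1 : ⌊(fib(2k+1)+1) γ⌋ = fib(2k)
lemma stoll_F5 {k : ℕ} (hk : 1 ≤ k) :
    ⌊((Nat.fib (2*k+1) + 1 : ℕ) : ℝ) * γ⌋₊ = Nat.fib (2*k) := by
  obtain ⟨j, rfl⟩ : ∃ j, k = j + 1 := ⟨k - 1, by omega⟩
  have hm := stoll_master γ hsq (2*j+2)
  have hp := stoll_pow_bounds hlo hhi (2*j+3) 3 (by omega)
  have hs : (-1:ℝ)^(2*j+2) = 1 := Even.neg_one_pow ⟨j+1, by ring⟩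
  rw [hs] at hm
  have h3 := (stoll_pows hsq).1
  rw [show 2*(j+1)+1 = 2*j+2+1 by ring, show 2*(j+1) = 2*j+2 by ring]
  apply stoll_floor_eq <;>
  · push_cast
    nlinarith [hm, hp.1, hp.2, hsq]

-- F6 : k ≥ 1 : ⌊(fib(2k+1)-1) γ⌋ + 1 = fib(2k)
lemma stoll_F6 {k : ℕ} (hk : 1 ≤ k) :
    ⌊((Nat.fib (2*k+1) - 1 : ℕ) : ℝ) * γ⌋₊ + 1 = Nat.fib (2*k) := by
  obtain ⟨j, rfl⟩ : ∃ j, k = j + 1 := ⟨k - 1, by omega⟩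
  have hm := stoll_master γ hsq (2*j+2)
  have hp := stoll_pow_bounds hlo hhi (2*j+3) 3 (by omega)
  have hs : (-1:ℝ)^(2*j+2) = 1 := Even.neg_one_pow ⟨j+1, by ring⟩
  rw [hs] at hm
  have h3 := (stoll_pows hsq).1
  have hfe : 1 ≤ Nat.fib (2*(j+1)) := Nat.fib_pos.mpr (by omega)
  have hfo : 1 ≤ Nat.fib (2*(j+1)+1) := Nat.fib_pos.mpr (by omega)
  have h1 : ⌊((Nat.fib (2*(j+1)+1) - 1 : ℕ) : ℝ) * γ⌋₊ = Nat.fib (2*(j+1)) - 1 := by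
    apply stoll_floor_eq <;>
    · rw [Nat.cast_sub hfe, Nat.cast_sub hfo,
        show 2*(j+1)+1 = 2*j+2+1 by ring, show 2*(j+1) = 2*j+2 by ring]
      push_cast
      nlinarith [hm, hp.1, hp.2, hsq]
  omega

-- F7 : k ≥ 2 : ⌊(fib(2k)-1) γ⌋ + 1 = fib(2k-1)
lemma stoll_F7 {k : ℕ} (hk : 2 ≤ k) :
    ⌊((Nat.fib (2*k) - 1 : ℕ) : ℝ) * γ⌋₊ + 1 = Nat.fib (2*k-1) := by
  obtain ⟨j, rfl⟩ : ∃ j, k = j + 2 := ⟨k - 2, by omega⟩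
  have hm := stoll_master γ hsq (2*j+3)
  have hp := stoll_pow_bounds hlo hhi (2*j+4) 4 (by omega)
  have hs : (-1:ℝ)^(2*j+3) = -1 := Odd.neg_one_pow ⟨j+1, by ring⟩
  rw [hs] at hm
  have h4 := (stoll_pows hsq).2.1
  have hfe : 1 ≤ Nat.fib (2*(j+2)) := Nat.fib_pos.mpr (by omega)
  have hfo : 1 ≤ Nat.fib (2*(j+2)-1) := Nat.fib_pos.mpr (by omega)
  have h1 : ⌊((Nat.fib (2*(j+2)) - 1 : ℕ) : ℝ) * γ⌋₊ = Nat.fib (2*(j+2)-1) - 1 := by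
    apply stoll_floor_eq <;>
    · rw [Nat.cast_sub hfe, Nat.cast_sub hfo,
        show 2*(j+2)-1 = 2*j+3 by omega, show 2*(j+2) = 2*j+3+1 by ring]
      push_cast
      nlinarith [hm, hp.1, hp.2, hsq]
  omega

-- L1 : preimages of fib(2k+1)-1 under g
lemma stoll_L1 {k n : ℕ} (hk : 1 ≤ k) (hgn : ⌊(n:ℝ)*γ⌋₊ + 1 = Nat.fib (2*k+1)) :
    Nat.fib (2*k+2) ≤ n + 1 ∧ n ≤ Nat.fib (2*k+2) := by
  have hγ0 : (0:ℝ) < γ := by linarith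
  have hx0 : (0:ℝ) ≤ (n:ℝ)*γ := by positivity
  have hfl : (⌊(n:ℝ)*γ⌋₊ : ℝ) ≤ (n:ℝ)*γ := Nat.floor_le hx0
  have hfu : (n:ℝ)*γ < ⌊(n:ℝ)*γ⌋₊ + 1 := Nat.lt_floor_add_one _
  have hcast : ((⌊(n:ℝ)*γ⌋₊ : ℝ) + 1) = (Nat.fib (2*k+1) : ℝ) := by exact_mod_cast congrArg (Nat.cast (R := ℝ)) hgn
  have hm := stoll_master γ hsq (2*k+1)
  have hs : (-1:ℝ)^(2*k+1) = -1 := Odd.neg_one_pow ⟨k, by ring⟩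
  rw [hs] at hm
  have hp := stoll_pow_bounds hlo hhi (2*k+2) 2 (by omega)
  -- upper: n γ < fib(2k+1) < (fib(2k+2)+1) γ
  have hub : (n:ℝ) < (Nat.fib (2*k+2) : ℝ) + 1 := by
    have h1 : (n:ℝ)*γ < ((Nat.fib (2*k+2) : ℝ) + 1)*γ := by
      rw [show 2*k+2 = 2*k+1+1 by ring]
      nlinarith [hm, hp.1, hp.2, hsq, hfu, hcast]
    exact lt_of_mul_lt_mul_right h1 (le_of_lt hγ0)
  have hlb : ((Nat.fib (2*k+2) : ℝ)) - 2 < (n:ℝ) := by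
    have h1 : ((Nat.fib (2*k+2) : ℝ) - 2)*γ < (n:ℝ)*γ := by
      rw [show 2*k+2 = 2*k+1+1 by ring]
      nlinarith [hm, hp.1, hp.2, hsq, hfl, hcast]
    exact lt_of_mul_lt_mul_right h1 (le_of_lt hγ0)
  have h1 : Nat.fib (2*k+2) < n + 2 := by exact_mod_cast (by push_cast; linarith : ((Nat.fib (2*k+2) : ℕ):ℝ) < ((n+2 : ℕ):ℝ))
  have h2 : n < Nat.fib (2*k+2) + 1 := by exact_mod_cast (by push_cast; linarith : ((n:ℕ):ℝ) < ((Nat.fib (2*k+2) + 1 : ℕ):ℝ))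
  omega

-- L2 : preimages of fib(2k)-1 under g
lemma stoll_L2 {k n : ℕ} (hk : 2 ≤ k) (hgn : ⌊(n:ℝ)*γ⌋₊ + 1 = Nat.fib (2*k)) :
    n + 1 = Nat.fib (2*k+1) := by
  obtain ⟨j, rfl⟩ : ∃ j, k = j + 2 := ⟨k - 2, by omega⟩
  have hγ0 : (0:ℝ) < γ := by linarith
  have hx0 : (0:ℝ) ≤ (n:ℝ)*γ := by positivity
  have hfl : (⌊(n:ℝ)*γ⌋₊ : ℝ) ≤ (n:ℝ)*γ := Nat.floor_le hx0
  have hfu : (n:ℝ)*γ < ⌊(n:ℝ)*γ⌋₊ + 1 := Nat.lt_floor_add_one _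
  have hcast : ((⌊(n:ℝ)*γ⌋₊ : ℝ) + 1) = (Nat.fib (2*(j+2)) : ℝ) := by exact_mod_cast congrArg (Nat.cast (R := ℝ)) hgn
  have hm := stoll_master γ hsq (2*j+4)
  have hs : (-1:ℝ)^(2*j+4) = 1 := Even.neg_one_pow ⟨j+2, by ring⟩
  rw [hs] at hm
  have hp := stoll_pow_bounds hlo hhi (2*j+5) 5 (by omega)
  have h5 := (stoll_pows hsq).2.2
  have hub : (n:ℝ) < (Nat.fib (2*(j+2)+1) : ℝ) := by
    have h1 : (n:ℝ)*γ < ((Nat.fib (2*(j+2)+1) : ℝ))*γ := by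
      rw [show 2*(j+2)+1 = 2*j+4+1 by ring, show 2*(j+2) = 2*j+4 by ring] at *
      nlinarith [hm, hp.1, hp.2, hsq, hfu, hcast]
    exact lt_of_mul_lt_mul_right h1 (le_of_lt hγ0)
  have hlb : ((Nat.fib (2*(j+2)+1) : ℝ)) - 2 < (n:ℝ) := by
    have h1 : ((Nat.fib (2*(j+2)+1) : ℝ) - 2)*γ < (n:ℝ)*γ := by
      rw [show 2*(j+2)+1 = 2*j+4+1 by ring, show 2*(j+2) = 2*j+4 by ring] at *
      nlinarith [hm, hp.1, hp.2, hsq, hfl, hcast]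
    exact lt_of_mul_lt_mul_right h1 (le_of_lt hγ0)
  have h1 : n < Nat.fib (2*(j+2)+1) := by exact_mod_cast hub
  have h2 : Nat.fib (2*(j+2)+1) < n + 2 := by exact_mod_cast (by push_cast; linarith : ((Nat.fib (2*(j+2)+1) : ℕ):ℝ) < ((n+2:ℕ):ℝ))
  omega

include hlo hhi hsq in
-- the exact generic identity
lemma stoll_I (hirr : Irrational γ) (n : ℕ) (hn : 1 ≤ n) :
    ⌊((n+1 : ℕ):ℝ)*γ⌋₊ + ⌊((⌊(n:ℝ)*γ⌋₊ + 1 : ℕ):ℝ)*γ⌋₊ = n := by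
  have hγ0 : (0:ℝ) < γ := by linarith
  have hγ1 : γ < 1 := by linarith
  set K := ⌊(n:ℝ)*γ⌋₊ with hK
  have hx0 : (0:ℝ) ≤ (n:ℝ)*γ := by positivity
  have hK1 : (K:ℝ) ≤ (n:ℝ)*γ := Nat.floor_le hx0
  have hK2 : (n:ℝ)*γ < K + 1 := Nat.lt_floor_add_one _
  have hn1 : (1:ℝ) ≤ (n:ℝ) := by exact_mod_cast hn
  have hKn : K < n := by
    have : (K:ℝ) < (n:ℝ) := by nlinarith
    exact_mod_cast this
  have hne0 : (n:ℝ)*γ ≠ K := by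
    intro h
    exact (hirr.natCast_mul (m := n) (by omega)).ne_nat K h
  have hne1 : ((n:ℝ)+1)*γ ≠ (K:ℝ)+1 := by
    intro h
    have : ((n+1:ℕ):ℝ)*γ = ((K+1:ℕ):ℝ) := by push_cast; linarith [h]
    exact (hirr.natCast_mul (m := n+1) (by omega)).ne_nat (K+1) (by push_cast at this ⊢; linarith)
  by_cases hc : (n:ℝ)*γ - K < 1 - γ
  · have e1 : ⌊((n+1 : ℕ):ℝ)*γ⌋₊ = K := by
      apply stoll_floor_eq
      · push_cast; nlinarith
      · push_cast; nlinarith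
    have e2 : ⌊((K + 1 : ℕ):ℝ)*γ⌋₊ = n - K := by
      apply stoll_floor_eq
      · rw [Nat.cast_sub hKn.le]; push_cast; nlinarith
      · rw [Nat.cast_sub hKn.le]; push_cast; nlinarith
    rw [e1, e2]; omega
  · push_neg at hc
    have hc' : 1 - γ < (n:ℝ)*γ - K := by
      rcases lt_or_eq_of_le hc with h | h
      · exact h
      · exact absurd (by linarith : ((n:ℝ)+1)*γ = (K:ℝ)+1) hne1
    have e1 : ⌊((n+1 : ℕ):ℝ)*γ⌋₊ = K + 1 := by
      apply stoll_floor_eq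
      · push_cast; nlinarith
      · push_cast; nlinarith
    have e2 : ⌊((K + 1 : ℕ):ℝ)*γ⌋₊ = n - K - 1 := by
      apply stoll_floor_eq
      · rw [Nat.cast_sub (by omega : 1 ≤ n - K), Nat.cast_sub hKn.le]; push_cast; nlinarith
      · rw [Nat.cast_sub (by omega : 1 ≤ n - K), Nat.cast_sub hKn.le]; push_cast; nlinarith
    rw [e1, e2]; omega

end Floors

lemma stoll_fib_ne {i m : ℕ} (hm : 3 ≤ m) (hp : i % 2 = m % 2) :
    Nat.fib i ≠ Nat.fib m + 1 := by
  intro h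
  rcases lt_trichotomy i m with hlt | rfl | hgt
  · have : Nat.fib i ≤ Nat.fib m := Nat.fib_mono hlt.le
    omega
  · omega
  · have h1 : Nat.fib (m+2) ≤ Nat.fib i := Nat.fib_mono (by omega)
    have h2 : Nat.fib (m+2) = Nat.fib m + Nat.fib (m+1) := Nat.fib_add_two
    have h3 : 3 ≤ Nat.fib (m+1) := by
      calc 3 = Nat.fib 4 := by decide
      _ ≤ Nat.fib (m+1) := Nat.fib_mono (by omega)
    omega


def stollEa (n : ℕ) : Prop := ∃ k : ℕ, 2 ≤ k ∧ n = Nat.fib (2*k) - 1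
def stollEb (n : ℕ) : Prop := ∃ k : ℕ, 1 ≤ k ∧ n = Nat.fib (2*k+1) - 1

section Main

variable {γ : ℝ} (hlo : 1/2 < γ) (hhi : γ < 2/3) (hsq : γ^2 = 1 - γ) (hirr : Irrational γ)


include hlo in
lemma stoll_gpos {m : ℕ} (hm : 2 ≤ m) : 1 ≤ ⌊(m:ℝ)*γ⌋₊ := by
  apply Nat.le_floor
  have h2 : (2:ℝ) ≤ (m:ℝ) := by exact_mod_cast hm
  push_cast
  nlinarith

include hlo hhi in
lemma stoll_glt {m : ℕ} (hm : 1 ≤ m) : ⌊(m:ℝ)*γ⌋₊ < m := by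
  rw [Nat.floor_lt (by positivity)]
  have h1 : (1:ℝ) ≤ (m:ℝ) := by exact_mod_cast hm
  nlinarith

include hlo hhi hsq hirr in
lemma stoll_key (a b : ℕ → ℕ) (ha0 : a 0 = 1) (hb0 : b 0 = 0)
    (ha : ∀ n : ℕ, 1 ≤ n → a n = n - b (a (n - 1)))
    (hb : ∀ n : ℕ, 1 ≤ n → b n = n - a (b (n - 1))) :
    ∀ n : ℕ, 1 ≤ n →
      (¬ stollEa n → a n = ⌊((n+1 : ℕ):ℝ)*γ⌋₊) ∧
      (stollEa n → a n = ⌊((n+1 : ℕ):ℝ)*γ⌋₊ + 1) ∧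
      (¬ stollEb n → b n = ⌊((n+1 : ℕ):ℝ)*γ⌋₊) ∧
      (stollEb n → b n = ⌊((n+1 : ℕ):ℝ)*γ⌋₊ - 1) := by
  intro n
  induction n using Nat.strong_induction_on with
  | _ n ih =>
  intro hn
  -- base case n = 1
  rcases eq_or_lt_of_le hn with h1 | hn2
  · -- n = 1
    obtain rfl : n = 1 := h1.symm
    have hb1 : b 1 = 0 := by rw [hb 1 le_rfl]; simp [hb0, ha0]
    have ha1 : a 1 = 1 := by rw [ha 1 le_rfl]; simp [ha0, hb1]
    have hT : ⌊((1+1 : ℕ):ℝ)*γ⌋₊ = 1 := by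
      rw [Nat.floor_eq_iff (by positivity)]
      constructor
      · push_cast; nlinarith
      · push_cast; nlinarith
    have hEa1 : ¬ stollEa 1 := by
      rintro ⟨k, hk, hkeq⟩
      have h3 : 3 ≤ Nat.fib (2*k) := by
        calc 3 = Nat.fib 4 := by decide
        _ ≤ Nat.fib (2*k) := Nat.fib_mono (by omega)
      omega
    have hEb1 : stollEb 1 := ⟨1, le_rfl, by decide⟩
    exact ⟨fun _ => by rw [ha1, hT], fun h => absurd h hEa1,
      fun h => absurd hEb1 h, fun _ => by rw [hb1, hT]⟩
  · -- n ≥ 2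
    have hn2 : 2 ≤ n := hn2
    have hapart : (¬ stollEa n → a n = ⌊((n+1 : ℕ):ℝ)*γ⌋₊) ∧
        (stollEa n → a n = ⌊((n+1 : ℕ):ℝ)*γ⌋₊ + 1) := by
      have hval : a n = n - b (a (n-1)) := ha n (by omega)
      by_cases hEaP : stollEa (n-1)
      · obtain ⟨k, hk, hkeq⟩ := hEaP
        have h3 : 3 ≤ Nat.fib (2*k) := by
          calc 3 = Nat.fib 4 := by decide
          _ ≤ Nat.fib (2*k) := Nat.fib_mono (by omega)
        have hneq : n = Nat.fib (2*k) := by omega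
        subst hneq
        have ihp := ih (Nat.fib (2*k) - 1) (by omega) (by omega)
        have haprev : a (Nat.fib (2*k) - 1) = ⌊((Nat.fib (2*k) - 1 + 1 : ℕ):ℝ)*γ⌋₊ + 1 :=
          ihp.2.1 ⟨k, hk, rfl⟩
        rw [show Nat.fib (2*k) - 1 + 1 = Nat.fib (2*k) by omega] at haprev
        have hF1 := stoll_F1 hlo hhi hsq hk
        have haprev2 : a (Nat.fib (2*k) - 1) = Nat.fib (2*k-1) := by omega
        have hlt : Nat.fib (2*k-1) < Nat.fib (2*k) := by
          have := Nat.fib_lt_fib_succ (n := 2*k-1) (by omega)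
          rwa [show 2*k-1+1 = 2*k by omega] at this
        have hfo : 1 ≤ Nat.fib (2*k-1) := Nat.fib_pos.mpr (by omega)
        have ihq := ih (Nat.fib (2*k-1)) hlt hfo
        have hnEb : ¬ stollEb (Nat.fib (2*k-1)) := by
          rintro ⟨j, hj, hjeq⟩
          have hfp : 1 ≤ Nat.fib (2*j+1) := Nat.fib_pos.mpr (by omega)
          exact stoll_fib_ne (i := 2*j+1) (m := 2*k-1) (by omega) (by omega) (by omega)
        have hbval : b (Nat.fib (2*k-1)) = Nat.fib (2*k-2) := by
          rw [ihq.2.2.1 hnEb, stoll_F2 hlo hhi hsq hk]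
        have hsum : Nat.fib (2*k-2) + Nat.fib (2*k-1) = Nat.fib (2*k) := by
          have := Nat.fib_add_two (n := 2*k-2)
          rw [show 2*k-2+2 = 2*k by omega, show 2*k-2+1 = 2*k-1 by omega] at this
          omega
        have hna : a (Nat.fib (2*k)) = Nat.fib (2*k-1) := by
          rw [hval, haprev2, hbval]; omega
        have hnEa : ¬ stollEa (Nat.fib (2*k)) := by
          rintro ⟨j, hj, hjeq⟩
          have hfp : 1 ≤ Nat.fib (2*j) := Nat.fib_pos.mpr (by omega)
          exact stoll_fib_ne (i := 2*j) (m := 2*k) (by omega) (by omega) (by omega)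
        have hT : ⌊((Nat.fib (2*k)+1 : ℕ):ℝ)*γ⌋₊ = Nat.fib (2*k-1) := stoll_F3 hlo hhi hsq hk
        exact ⟨fun _ => by rw [hna, hT], fun h => absurd h hnEa⟩
      · have ihp := ih (n-1) (by omega) (by omega)
        have haprev : a (n-1) = ⌊(((n-1)+1 : ℕ):ℝ)*γ⌋₊ := ihp.1 hEaP
        rw [show n-1+1 = n by omega] at haprev
        have hKpos : 1 ≤ ⌊(n:ℝ)*γ⌋₊ := stoll_gpos hlo hn2
        have hKlt : ⌊(n:ℝ)*γ⌋₊ < n := stoll_glt hlo hhi (by omega)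
        have ihq := ih ⌊(n:ℝ)*γ⌋₊ hKlt hKpos
        have hI := stoll_I hlo hhi hsq hirr n (by omega)
        have hTpos : 1 ≤ ⌊((n+1:ℕ):ℝ)*γ⌋₊ := stoll_gpos hlo (by omega)
        by_cases hEbK : stollEb ⌊(n:ℝ)*γ⌋₊
        · obtain ⟨k, hk, hkeq⟩ := hEbK
          have hfp : 1 ≤ Nat.fib (2*k+1) := Nat.fib_pos.mpr (by omega)
          have hgn : ⌊(n:ℝ)*γ⌋₊ + 1 = Nat.fib (2*k+1) := by omega
          have hL := stoll_L1 hlo hhi hsq hk hgn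
          have hne : n ≠ Nat.fib (2*k+2) := by
            intro h
            exact hEaP ⟨k+1, by omega, by rw [show 2*(k+1) = 2*k+2 by ring]; omega⟩
          have hneq : n = Nat.fib (2*k+2) - 1 := by omega
          have hEan : stollEa n := ⟨k+1, by omega, by rw [show 2*(k+1) = 2*k+2 by ring]; omega⟩
          have hbK : b ⌊(n:ℝ)*γ⌋₊ = ⌊((⌊(n:ℝ)*γ⌋₊ + 1 : ℕ):ℝ)*γ⌋₊ - 1 := ihq.2.2.2 ⟨k, hk, hkeq⟩
          have hFpos : 1 ≤ ⌊((⌊(n:ℝ)*γ⌋₊ + 1 : ℕ):ℝ)*γ⌋₊ := stoll_gpos hlo (by omega)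
          have hna : a n = ⌊((n+1:ℕ):ℝ)*γ⌋₊ + 1 := by
            rw [hval, haprev, hbK]; omega
          exact ⟨fun h => absurd hEan h, fun _ => hna⟩
        · have hbK : b ⌊(n:ℝ)*γ⌋₊ = ⌊((⌊(n:ℝ)*γ⌋₊ + 1 : ℕ):ℝ)*γ⌋₊ := ihq.2.2.1 hEbK
          have hna : a n = ⌊((n+1:ℕ):ℝ)*γ⌋₊ := by rw [hval, haprev, hbK]; omega
          have hnEa : ¬ stollEa n := by
            rintro ⟨k, hk, hkeq⟩
            apply hEbK
            have hF7 := stoll_F7 hlo hhi hsq hk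
            rw [← hkeq] at hF7
            have hfo : 1 ≤ Nat.fib (2*k-1) := Nat.fib_pos.mpr (by omega)
            exact ⟨k-1, by omega, by rw [show 2*(k-1)+1 = 2*k-1 by omega]; omega⟩
          exact ⟨fun _ => hna, fun h => absurd h hnEa⟩
    have hbpart : (¬ stollEb n → b n = ⌊((n+1 : ℕ):ℝ)*γ⌋₊) ∧
        (stollEb n → b n = ⌊((n+1 : ℕ):ℝ)*γ⌋₊ - 1) := by
      have hval : b n = n - a (b (n-1)) := hb n (by omega)
      by_cases hEbP : stollEb (n-1)
      · obtain ⟨k, hk, hkeq⟩ := hEbP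
        have h2f : 2 ≤ Nat.fib (2*k+1) := by
          calc 2 = Nat.fib 3 := by decide
          _ ≤ Nat.fib (2*k+1) := Nat.fib_mono (by omega)
        have hneq : n = Nat.fib (2*k+1) := by omega
        subst hneq
        have ihp := ih (Nat.fib (2*k+1) - 1) (by omega) (by omega)
        have hbprev : b (Nat.fib (2*k+1) - 1) = ⌊((Nat.fib (2*k+1) - 1 + 1 : ℕ):ℝ)*γ⌋₊ - 1 :=
          ihp.2.2.2 ⟨k, hk, rfl⟩
        rw [show Nat.fib (2*k+1) - 1 + 1 = Nat.fib (2*k+1) by omega] at hbprev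
        have hF4 := stoll_F4 hlo hhi hsq hk
        have hbprev2 : b (Nat.fib (2*k+1) - 1) = Nat.fib (2*k) - 1 := by omega
        have hfe : 1 ≤ Nat.fib (2*k) := Nat.fib_pos.mpr (by omega)
        have haval : a (Nat.fib (2*k) - 1) = Nat.fib (2*k-1) := by
          rcases eq_or_lt_of_le hk with rfl | hk2
          · have h0 : Nat.fib (2*1) - 1 = 0 := by decide
            have h1 : Nat.fib (2*1-1) = 1 := by decide
            rw [h0, h1, ha0]
          · have hk2 : 2 ≤ k := hk2
            have h3 : 3 ≤ Nat.fib (2*k) := by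
              calc 3 = Nat.fib 4 := by decide
              _ ≤ Nat.fib (2*k) := Nat.fib_mono (by omega)
            have hltn : Nat.fib (2*k) - 1 < Nat.fib (2*k+1) := by
              have := Nat.fib_mono (show 2*k ≤ 2*k+1 by omega)
              omega
            have ihq := ih (Nat.fib (2*k) - 1) hltn (by omega)
            have hthis := ihq.2.1 ⟨k, hk2, rfl⟩
            rw [show Nat.fib (2*k) - 1 + 1 = Nat.fib (2*k) by omega] at hthis
            have hF1 := stoll_F1 hlo hhi hsq hk2
            omega
        have hsum : Nat.fib (2*k-1) + Nat.fib (2*k) = Nat.fib (2*k+1) := by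
          have := Nat.fib_add_two (n := 2*k-1)
          rw [show 2*k-1+2 = 2*k+1 by omega, show 2*k-1+1 = 2*k by omega] at this
          omega
        have hfo : 1 ≤ Nat.fib (2*k-1) := Nat.fib_pos.mpr (by omega)
        have hnb : b (Nat.fib (2*k+1)) = Nat.fib (2*k) := by
          rw [hval, hbprev2, haval]; omega
        have hnEb : ¬ stollEb (Nat.fib (2*k+1)) := by
          rintro ⟨j, hj, hjeq⟩
          have hfp : 1 ≤ Nat.fib (2*j+1) := Nat.fib_pos.mpr (by omega)
          exact stoll_fib_ne (i := 2*j+1) (m := 2*k+1) (by omega) (by omega) (by omega)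
        have hT := stoll_F5 hlo hhi hsq hk
        exact ⟨fun _ => by rw [hnb, hT], fun h => absurd h hnEb⟩
      · have ihp := ih (n-1) (by omega) (by omega)
        have hbprev : b (n-1) = ⌊(((n-1)+1 : ℕ):ℝ)*γ⌋₊ := ihp.2.2.1 hEbP
        rw [show n-1+1 = n by omega] at hbprev
        have hKpos : 1 ≤ ⌊(n:ℝ)*γ⌋₊ := stoll_gpos hlo hn2
        have hKlt : ⌊(n:ℝ)*γ⌋₊ < n := stoll_glt hlo hhi (by omega)
        have ihq := ih ⌊(n:ℝ)*γ⌋₊ hKlt hKpos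
        have hI := stoll_I hlo hhi hsq hirr n (by omega)
        have hTpos : 1 ≤ ⌊((n+1:ℕ):ℝ)*γ⌋₊ := stoll_gpos hlo (by omega)
        by_cases hEaK : stollEa ⌊(n:ℝ)*γ⌋₊
        · obtain ⟨k, hk, hkeq⟩ := hEaK
          have hfe : 1 ≤ Nat.fib (2*k) := Nat.fib_pos.mpr (by omega)
          have hgn : ⌊(n:ℝ)*γ⌋₊ + 1 = Nat.fib (2*k) := by omega
          have hL := stoll_L2 hlo hhi hsq hk hgn
          have hEbn : stollEb n := ⟨k, by omega, by omega⟩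
          have haK : a ⌊(n:ℝ)*γ⌋₊ = ⌊((⌊(n:ℝ)*γ⌋₊ + 1 : ℕ):ℝ)*γ⌋₊ + 1 := ihq.2.1 ⟨k, hk, hkeq⟩
          have hnb : b n = ⌊((n+1:ℕ):ℝ)*γ⌋₊ - 1 := by rw [hval, hbprev, haK]; omega
          exact ⟨fun h => absurd hEbn h, fun _ => hnb⟩
        · have haK : a ⌊(n:ℝ)*γ⌋₊ = ⌊((⌊(n:ℝ)*γ⌋₊ + 1 : ℕ):ℝ)*γ⌋₊ := ihq.1 hEaK
          have hnb : b n = ⌊((n+1:ℕ):ℝ)*γ⌋₊ := by rw [hval, hbprev, haK]; omega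
          have hnEb : ¬ stollEb n := by
            rintro ⟨k, hk, hkeq⟩
            have hk2 : 2 ≤ k := by
              rcases eq_or_lt_of_le hk with rfl | h
              · have : Nat.fib (2*1+1) = 2 := by decide
                omega
              · omega
            apply hEaK
            have hF6 := stoll_F6 hlo hhi hsq hk
            rw [← hkeq] at hF6
            exact ⟨k, hk2, by omega⟩
          exact ⟨fun _ => hnb, fun h => absurd h hnEb⟩
    exact ⟨hapart.1, hapart.2, hbpart.1, hbpart.2⟩

end Main

/-- Stoll's theorem on Hofstadter's married functions: with `a(0) = 1`,
`b(0) = 0`, `a(n) = n − b(a(n−1))` and `b(n) = n − a(b(n−1))` for `n ≥ 1`,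
and `γ = (√5−1)/2`, for all `n ≥ 1`: `a(n) = ⌊(n+1)γ⌋` unless
`n = F_{2k} − 1` (`k ≥ 2`), in which case `a(F_{2k} − 1) = ⌊F_{2k}·γ⌋ + 1`;
and `b(n) = ⌊(n+1)γ⌋` unless `n = F_{2k+1} − 1` (`k ≥ 1`), in which case
`b(F_{2k+1} − 1) = ⌊F_{2k+1}·γ⌋ − 1`. -/
theorem stoll_married_functions
    (γ : ℝ) (hγ : γ = (Real.sqrt 5 - 1) / 2)
    (a b : ℕ → ℕ) (ha0 : a 0 = 1) (hb0 : b 0 = 0)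
    (ha : ∀ n : ℕ, 1 ≤ n → a n = n - b (a (n - 1)))
    (hb : ∀ n : ℕ, 1 ≤ n → b n = n - a (b (n - 1))) :
    (∀ n : ℕ, 1 ≤ n → (¬ ∃ k : ℕ, 2 ≤ k ∧ n = Nat.fib (2 * k) - 1) →
      a n = ⌊((n : ℝ) + 1) * γ⌋₊) ∧
    (∀ k : ℕ, 2 ≤ k →
      a (Nat.fib (2 * k) - 1) = ⌊(Nat.fib (2 * k) : ℝ) * γ⌋₊ + 1) ∧
    (∀ n : ℕ, 1 ≤ n → (¬ ∃ k : ℕ, 1 ≤ k ∧ n = Nat.fib (2 * k + 1) - 1) →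
      b n = ⌊((n : ℝ) + 1) * γ⌋₊) ∧
    (∀ k : ℕ, 1 ≤ k →
      b (Nat.fib (2 * k + 1) - 1) = ⌊(Nat.fib (2 * k + 1) : ℝ) * γ⌋₊ - 1) := by
  have hfacts := stoll_gamma_facts
  rw [← hγ] at hfacts
  obtain ⟨hlo, hhi, hsq, hirr⟩ := hfacts
  have key := stoll_key hlo hhi hsq hirr a b ha0 hb0 ha hb
  refine ⟨?_, ?_, ?_, ?_⟩
  · intro n hn hne
    rw [(key n hn).1 hne]
    congr 2
    push_cast
    ring
  · intro k hk
    have h3 : 3 ≤ Nat.fib (2*k) := by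
      calc 3 = Nat.fib 4 := by decide
      _ ≤ Nat.fib (2*k) := Nat.fib_mono (by omega)
    have h := (key (Nat.fib (2*k) - 1) (by omega)).2.1 ⟨k, hk, rfl⟩
    rw [show Nat.fib (2*k) - 1 + 1 = Nat.fib (2*k) by omega] at h
    exact h
  · intro n hn hne
    rw [(key n hn).2.2.1 hne]
    congr 2
    push_cast
    ring
  · intro k hk
    have h2f : 2 ≤ Nat.fib (2*k+1) := by
      calc 2 = Nat.fib 3 := by decide
      _ ≤ Nat.fib (2*k+1) := Nat.fib_mono (by omega)
    have h := (key (Nat.fib (2*k+1) - 1) (by omega)).2.2.2 ⟨k, hk, rfl⟩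
    rw [show Nat.fib (2*k+1) - 1 + 1 = Nat.fib (2*k+1) by omega] at h
    exact h
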